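/- Let q be a real number with q > 0, q ≠ 1, let n be a natural number, and let K, E, F be the spin-(n/2) representation operators on ℂ^{n+1} (K e_i = q^{i−n/2} e_i, E e_i = √([n−i][i+1]) e_{i+1}, F e_i = √([n−i+1][i]) e_{i−1}). Define Z₁ = K⁻¹E, Z₀ = (q⁻¹FE − qEF)/√[2], Z₋₁ = −K⁻¹F, let s(ψ₁), s(ψ₀), s(ψ₋₁) be the 2×2 spin matrices, and let D_n = −q[2]·Z₁ ⊗ s(ψ₋₁) + [2]·Z₀ ⊗ s(ψ₀) − q⁻¹[2]·Z₋₁ ⊗ s(ψ₁) acting on ℂ^{n+1} ⊗ ℂ². Then D_n satisfies the quadratic relation (D_n − [n]·1)·(D_n + [n+2]·1) = 0, and its trace is Tr(D_n) = (n+2)·[n] − n·[n+2]. (Equivalently, with j = n/2, the Dirac operator D acts on V_j ⊗ Σ with eigenvalue [2j] on the spin-(j+1/2) component of dimension 2j+2 and eigenvalue −[2j+2] on the spin-(j−1/2) component of dimension 2j.) -/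

import Mathlib

open Matrix Kronecker

/-- The `q`-integer `[m] = (q^m − q^{−m})/(q − q⁻¹)`. -/
noncomputable def qInt (q : ℝ) (m : ℕ) : ℝ := (q ^ m - q⁻¹ ^ m) / (q - q⁻¹)

/-- `K eᵢ = q^{i − n/2} eᵢ` on `ℂ^{n+1}` (real power of `q > 0`). -/
noncomputable def Kmat (q : ℝ) (n : ℕ) : Matrix (Fin (n + 1)) (Fin (n + 1)) ℂ :=
  Matrix.diagonal fun i => ((q ^ ((i : ℝ) - (n : ℝ) / 2) : ℝ) : ℂ)

/-- `K⁻¹ eᵢ = q^{n/2 − i} eᵢ` on `ℂ^{n+1}`. -/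
noncomputable def Kinvmat (q : ℝ) (n : ℕ) : Matrix (Fin (n + 1)) (Fin (n + 1)) ℂ :=
  Matrix.diagonal fun i => ((q ^ ((n : ℝ) / 2 - (i : ℝ)) : ℝ) : ℂ)

/-- `E eᵢ = √([n−i]·[i+1]) e_{i+1}` on `ℂ^{n+1}` (and `E e_n = 0`). -/
noncomputable def Emat (q : ℝ) (n : ℕ) : Matrix (Fin (n + 1)) (Fin (n + 1)) ℂ :=
  Matrix.of fun j i =>
    if (j : ℕ) = (i : ℕ) + 1 then
      ((Real.sqrt (qInt q (n - (i : ℕ)) * qInt q ((i : ℕ) + 1)) : ℝ) : ℂ) else 0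

/-- `F eᵢ = √([n−i+1]·[i]) e_{i−1}` on `ℂ^{n+1}` (and `F e₀ = 0`). -/
noncomputable def Fmat (q : ℝ) (n : ℕ) : Matrix (Fin (n + 1)) (Fin (n + 1)) ℂ :=
  Matrix.of fun j i =>
    if (j : ℕ) + 1 = (i : ℕ) then
      ((Real.sqrt (qInt q (n - (i : ℕ) + 1) * qInt q (i : ℕ)) : ℝ) : ℂ) else 0

/-- The spin matrix `s(ψ₁) = [[0, √q],[0, 0]]`. -/
noncomputable def psi1 (q : ℝ) : Matrix (Fin 2) (Fin 2) ℂ :=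
  !![0, ((Real.sqrt q : ℝ) : ℂ); 0, 0]

/-- The spin matrix `s(ψ₀) = −(1/√[2])·[[q⁻¹, 0],[0, −q]]` where `[2] = q + q⁻¹`. -/
noncomputable def psi0 (q : ℝ) : Matrix (Fin 2) (Fin 2) ℂ :=
  (-(((1 / Real.sqrt (q + q⁻¹) : ℝ) : ℂ))) • !![((q⁻¹ : ℝ) : ℂ), 0; 0, -((q : ℝ) : ℂ)]

/-- The spin matrix `s(ψ₋₁) = [[0, 0],[−1/√q, 0]]`. -/
noncomputable def psim1 (q : ℝ) : Matrix (Fin 2) (Fin 2) ℂ :=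
  !![0, 0; -((((1 / Real.sqrt q) : ℝ) : ℂ)), 0]

/-- The quantum Lie algebra element `Z₁ = K⁻¹E` in the spin-`n/2` representation. -/
noncomputable def Z1 (q : ℝ) (n : ℕ) : Matrix (Fin (n + 1)) (Fin (n + 1)) ℂ :=
  Kinvmat q n * Emat q n

/-- The quantum Lie algebra element `Z₀ = (q⁻¹FE − qEF)/√[2]` in the spin-`n/2`
representation. -/
noncomputable def Z0 (q : ℝ) (n : ℕ) : Matrix (Fin (n + 1)) (Fin (n + 1)) ℂ :=
  (((Real.sqrt (q + q⁻¹) : ℝ) : ℂ))⁻¹ •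
    (((q : ℂ))⁻¹ • (Fmat q n * Emat q n) - (q : ℂ) • (Emat q n * Fmat q n))

/-- The quantum Lie algebra element `Z₋₁ = −K⁻¹F` in the spin-`n/2` representation. -/
noncomputable def Zm1 (q : ℝ) (n : ℕ) : Matrix (Fin (n + 1)) (Fin (n + 1)) ℂ :=
  -(Kinvmat q n * Fmat q n)

/-- The Dirac operator
`D_n = −q[2]·Z₁ ⊗ s(ψ₋₁) + [2]·Z₀ ⊗ s(ψ₀) − q⁻¹[2]·Z₋₁ ⊗ s(ψ₁)` on `ℂ^{n+1} ⊗ ℂ²`. -/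
noncomputable def Dirac (q : ℝ) (n : ℕ) :
    Matrix (Fin (n + 1) × Fin 2) (Fin (n + 1) × Fin 2) ℂ :=
  (-(q : ℂ) * ((q + q⁻¹ : ℝ) : ℂ)) • (Z1 q n ⊗ₖ psim1 q) +
    ((q + q⁻¹ : ℝ) : ℂ) • (Z0 q n ⊗ₖ psi0 q) +
    (-((q : ℂ))⁻¹ * ((q + q⁻¹ : ℝ) : ℂ)) • (Zm1 q n ⊗ₖ psi1 q)

namespace DiracAux

variable {q : ℝ} {n : ℕ}


noncomputable def fq (q t : ℝ) : ℝ := (t - t⁻¹) / (q - q⁻¹)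

noncomputable def Af (q : ℝ) (n i : ℕ) : ℝ :=
  qInt q (n - i + 1) * qInt q i - q⁻¹ ^ 2 * (qInt q (n - i) * qInt q (i + 1))

noncomputable def Bf (q : ℝ) (n i : ℕ) : ℝ :=
  qInt q (n - i) * qInt q (i + 1) - q ^ 2 * (qInt q (n - i + 1) * qInt q i)

lemma fq_eq (q t : ℝ) (hq : q ≠ 0) : fq q t = (t - t⁻¹) * q / (q^2 - 1) := by
  unfold fq
  rw [show q - q⁻¹ = (q^2-1)/q by field_simp]
  rw [div_div_eq_mul_div]

set_option maxHeartbeats 1000000 in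
lemma L1x (q x y : ℝ) (hq : q ≠ 0) (hx : x ≠ 0) (hy : y ≠ 0) (hs : q^2 - 1 ≠ 0) :
    (fq q (y*q^2) * fq q x - q⁻¹^2 * (fq q (y*q) * fq q (x*q)) - fq q (x*q*y)) *
      (fq q (y*q^2) * fq q x - q⁻¹^2 * (fq q (y*q) * fq q (x*q)) + fq q (x*q*y*q^2))
      + (q+q⁻¹)^2 * (y/x) * (fq q (y*q) * fq q (x*q)) = 0 := by
  simp only [fq_eq _ _ hq]
  field_simp
  ring

set_option maxHeartbeats 1000000 in
lemma L2x (q x y : ℝ) (hq : q ≠ 0) (hx : x ≠ 0) (hy : y ≠ 0) (hs : q^2 - 1 ≠ 0) :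
    (fq q (y*q^2) * fq q x - q⁻¹^2 * (fq q (y*q) * fq q (x*q)))
    + (fq q y * fq q (x*q^2) - q^2 * (fq q (y*q) * fq q (x*q)))
    = fq q (x*q*y) - fq q (x*q*y*q^2) := by
  simp only [fq_eq _ _ hq]
  field_simp
  ring

set_option maxHeartbeats 1000000 in
lemma L3x (q x y : ℝ) (hq : q ≠ 0) (hx : x ≠ 0) (hy : y ≠ 0) (hs : q^2 - 1 ≠ 0) :
    (fq q y * fq q (x*q^2) - q^2 * (fq q (y*q) * fq q (x*q)) - fq q (x*q*y)) *
      (fq q y * fq q (x*q^2) - q^2 * (fq q (y*q) * fq q (x*q)) + fq q (x*q*y*q^2))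
      + (q+q⁻¹)^2 * (y/x) * (fq q (y*q) * fq q (x*q)) = 0 := by
  simp only [fq_eq _ _ hq]
  field_simp
  ring

lemma qInt_eq_fq (q : ℝ) (m : ℕ) : qInt q m = fq q (q^m) := by
  rw [qInt, fq, inv_pow]

lemma hs_of {q : ℝ} (hq : 0 < q) (hq1 : q ≠ 1) : q^2 - 1 ≠ 0 := by
  intro h
  have : q = 1 := by nlinarith
  exact hq1 this

lemma hd {q : ℝ} (hq : 0 < q) (hq1 : q ≠ 1) : q - q⁻¹ ≠ 0 := by
  intro h
  have h2 : q * q = 1 := by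
    field_simp at h
    nlinarith [h]
  have : q = 1 := by nlinarith
  exact hq1 this

lemma qInt_nonneg {q : ℝ} (hq : 0 < q) (m : ℕ) : 0 ≤ qInt q m := by
  have h0 : (0:ℝ) < q⁻¹ := by positivity
  unfold qInt
  rcases le_or_gt q 1 with h | h
  · have h1 : 1 ≤ q⁻¹ := by rwa [one_le_inv_iff₀, and_iff_right hq]
    have h2 : q ≤ q⁻¹ := le_trans h h1
    have h3 := pow_le_pow_left₀ hq.le h2 m
    exact div_nonneg_iff.mpr (Or.inr ⟨by linarith, by linarith⟩)
  · have h1 : q⁻¹ ≤ 1 := by rw [inv_le_one_iff₀]; right; exact h.le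
    have h2 : q⁻¹ ≤ q := le_trans h1 h.le
    have h3 := pow_le_pow_left₀ h0.le h2 m
    exact div_nonneg (by linarith) (by linarith)

lemma qInt_zero {q : ℝ} : qInt q 0 = 0 := by simp [qInt]

lemma qInt_one {q : ℝ} (hq : 0 < q) (hq1 : q ≠ 1) : qInt q 1 = 1 := by
  simp [qInt, div_self (hd hq hq1)]

lemma L1 {q : ℝ} (hq : 0 < q) (hq1 : q ≠ 1) (k r : ℕ) :
    (Af q (k+1+r) k - qInt q (k+1+r)) * (Af q (k+1+r) k + qInt q (k+1+r+2))
      + (q+q⁻¹)^2 * (q^r / q^k) * (qInt q (r+1) * qInt q (k+1)) = 0 := by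
  have hq0 : q ≠ 0 := ne_of_gt hq
  have h := L1x q (q^k) (q^r) hq0 (pow_ne_zero _ hq0) (pow_ne_zero _ hq0) (hs_of hq hq1)
  have e1 : q^(k+1+r) = q^k*q*q^r := by rw [pow_add, pow_add, pow_one]
  have e2 : q^(k+1+r+2) = q^k*q*q^r*q^2 := by rw [pow_add, e1]
  have e3 : q^(r+2) = q^r*q^2 := by rw [pow_add]
  have e4 : q^(r+1) = q^r*q := by rw [pow_add, pow_one]
  have e5 : q^(k+1) = q^k*q := by rw [pow_add, pow_one]
  simp only [Af, show k+1+r-k+1 = r+2 from by omega, show k+1+r-k = r+1 from by omega,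
    qInt_eq_fq, e1, e2, e3, e4, e5]
  exact h

lemma L2 {q : ℝ} (hq : 0 < q) (hq1 : q ≠ 1) (k r : ℕ) :
    Af q (k+1+r) k + Bf q (k+1+r) (k+1) = qInt q (k+1+r) - qInt q (k+1+r+2) := by
  have hq0 : q ≠ 0 := ne_of_gt hq
  have h := L2x q (q^k) (q^r) hq0 (pow_ne_zero _ hq0) (pow_ne_zero _ hq0) (hs_of hq hq1)
  have e1 : q^(k+1+r) = q^k*q*q^r := by rw [pow_add, pow_add, pow_one]
  have e2 : q^(k+1+r+2) = q^k*q*q^r*q^2 := by rw [pow_add, e1]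
  have e3 : q^(r+2) = q^r*q^2 := by rw [pow_add]
  have e4 : q^(r+1) = q^r*q := by rw [pow_add, pow_one]
  have e5 : q^(k+1) = q^k*q := by rw [pow_add, pow_one]
  have e6 : q^(k+2) = q^k*q^2 := by rw [pow_add]
  simp only [Af, Bf, show k+1+r-k+1 = r+2 from by omega, show k+1+r-k = r+1 from by omega,
    show k+1+r-(k+1)+1 = r+1 from by omega, show k+1+r-(k+1) = r from by omega,
    show k+1+1 = k+2 from rfl,
    qInt_eq_fq, e1, e2, e3, e4, e5, e6]
  exact h

lemma L3 {q : ℝ} (hq : 0 < q) (hq1 : q ≠ 1) (k r : ℕ) :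
    (Bf q (k+1+r) (k+1) - qInt q (k+1+r)) * (Bf q (k+1+r) (k+1) + qInt q (k+1+r+2))
      + (q+q⁻¹)^2 * (q^r / q^k) * (qInt q (r+1) * qInt q (k+1)) = 0 := by
  have hq0 : q ≠ 0 := ne_of_gt hq
  have h := L3x q (q^k) (q^r) hq0 (pow_ne_zero _ hq0) (pow_ne_zero _ hq0) (hs_of hq hq1)
  have e1 : q^(k+1+r) = q^k*q*q^r := by rw [pow_add, pow_add, pow_one]
  have e2 : q^(k+1+r+2) = q^k*q*q^r*q^2 := by rw [pow_add, e1]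
  have e4 : q^(r+1) = q^r*q := by rw [pow_add, pow_one]
  have e5 : q^(k+1) = q^k*q := by rw [pow_add, pow_one]
  have e6 : q^(k+2) = q^k*q^2 := by rw [pow_add]
  simp only [Bf, show k+1+r-(k+1)+1 = r+1 from by omega, show k+1+r-(k+1) = r from by omega,
    show k+1+1 = k+2 from rfl,
    qInt_eq_fq, e1, e2, e4, e5, e6]
  exact h

noncomputable def Cf (q : ℝ) (n k : ℕ) : ℝ :=
  (q + q⁻¹) * (q ^ ((n:ℝ)/2 - (k:ℝ) - 1/2) * Real.sqrt (qInt q (n - k) * qInt q (k + 1)))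

noncomputable def Gblk (q : ℝ) (n : ℕ) (k : Fin (n+1)) : Matrix (Fin 2) (Fin 2) ℂ :=
  !![((Af q n k : ℝ) : ℂ), ((Cf q n k : ℝ) : ℂ);
     ((Cf q n k : ℝ) : ℂ), ((Bf q n (((k+1 : Fin (n+1))) : ℕ) : ℝ) : ℂ)]

open Fin.NatCast in
def phi (n : ℕ) : (Fin (n+1) × Fin 2) ≃ (Fin 2 × Fin (n+1)) where
  toFun p := (p.2, p.1 - (((p.2 : ℕ) : Fin (n+1))))
  invFun p := (p.2 + (((p.1 : ℕ) : Fin (n+1))), p.1)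
  left_inv p := by simp
  right_inv p := by simp

variable {q : ℝ} {n : ℕ}

lemma mul_FE (hq : 0 < q) (j i : Fin (n+1)) :
    (Fmat q n * Emat q n) j i
      = if j = i then ((qInt q (n - (i:ℕ)) * qInt q ((i:ℕ) + 1) : ℝ) : ℂ) else 0 := by
  rw [Matrix.mul_apply]
  by_cases h : j = i
  · subst h
    by_cases hi : (j : ℕ) < n
    · rw [if_pos rfl,
        Finset.sum_eq_single (⟨(j:ℕ)+1, by omega⟩ : Fin (n+1))]
      · simp only [Fmat, Emat, Matrix.of_apply, Fin.val_mk, eq_self_iff_true, if_true]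
        rw [show n - ((j:ℕ)+1) + 1 = n - (j:ℕ) from by omega,
          ← Complex.ofReal_mul,
          Real.mul_self_sqrt (mul_nonneg (qInt_nonneg hq _) (qInt_nonneg hq _))]
      · intro b _ hb
        have hbv : (b:ℕ) ≠ (j:ℕ)+1 := fun hv => hb (Fin.ext hv)
        simp only [Fmat, Emat, Matrix.of_apply]
        rw [if_neg (fun hv => hbv hv), mul_zero]
      · intro habs; exact absurd (Finset.mem_univ _) habs
    · rw [if_pos rfl]
      have : (j:ℕ) = n := by omega
      rw [show n - (j:ℕ) = 0 from by omega, qInt_zero, zero_mul, Complex.ofReal_zero]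
      apply Finset.sum_eq_zero
      intro k _
      simp only [Fmat, Emat, Matrix.of_apply]
      rw [if_neg (by omega : ¬((k:ℕ) = (j:ℕ)+1)), mul_zero]
  · rw [if_neg h]
    have hv : (j:ℕ) ≠ (i:ℕ) := fun hv => h (Fin.ext hv)
    apply Finset.sum_eq_zero
    intro k _
    simp only [Fmat, Emat, Matrix.of_apply]
    by_cases h1 : (j:ℕ) + 1 = (k:ℕ)
    · rw [if_neg (by omega : ¬((k:ℕ) = (i:ℕ)+1)), mul_zero]
    · rw [if_neg h1, zero_mul]

lemma mul_EF (hq : 0 < q) (j i : Fin (n+1)) :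
    (Emat q n * Fmat q n) j i
      = if j = i then ((qInt q (n - (i:ℕ) + 1) * qInt q (i:ℕ) : ℝ) : ℂ) else 0 := by
  rw [Matrix.mul_apply]
  by_cases h : j = i
  · subst h
    by_cases hi : 0 < (j : ℕ)
    · rw [if_pos rfl,
        Finset.sum_eq_single (⟨(j:ℕ)-1, by omega⟩ : Fin (n+1))]
      · simp only [Emat, Fmat, Matrix.of_apply, Fin.val_mk]
        rw [if_pos (by omega), if_pos (by omega),
          show n - ((j:ℕ)-1) = n - (j:ℕ) + 1 from by omega,
          show (j:ℕ) - 1 + 1 = (j:ℕ) from by omega,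
          ← Complex.ofReal_mul,
          Real.mul_self_sqrt (mul_nonneg (qInt_nonneg hq _) (qInt_nonneg hq _))]
      · intro b _ hb
        have hbv : (b:ℕ) ≠ (j:ℕ)-1 := fun hv => hb (Fin.ext hv)
        simp only [Emat, Fmat, Matrix.of_apply]
        rw [if_neg (by omega : ¬((j:ℕ) = (b:ℕ)+1)), zero_mul]
      · intro habs; exact absurd (Finset.mem_univ _) habs
    · rw [if_pos rfl]
      have : (j:ℕ) = 0 := by omega
      rw [this, qInt_zero, mul_zero, Complex.ofReal_zero]
      apply Finset.sum_eq_zero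
      intro k _
      simp only [Emat, Fmat, Matrix.of_apply]
      rw [if_neg (by omega : ¬((k:ℕ)+1 = (j:ℕ))), mul_zero]
  · rw [if_neg h]
    have hv : (j:ℕ) ≠ (i:ℕ) := fun hv => h (Fin.ext hv)
    apply Finset.sum_eq_zero
    intro k _
    simp only [Emat, Fmat, Matrix.of_apply]
    by_cases h1 : (j:ℕ) = (k:ℕ) + 1
    · rw [if_neg (by omega : ¬((k:ℕ)+1 = (i:ℕ))), mul_zero]
    · rw [if_neg h1, zero_mul]



lemma Cf_last (q : ℝ) (n : ℕ) : Cf q n n = 0 := by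
  simp [Cf, Nat.sub_self, qInt_zero]

lemma rpow_helper1 (hq : 0 < q) (e : ℝ) : q * q ^ e * (1 / Real.sqrt q) = q ^ (e + 1/2) := by
  rw [Real.sqrt_eq_rpow, one_div, ← Real.rpow_neg hq.le,
    show q * q ^ e * q ^ (-(1/2 : ℝ)) = q ^ (1:ℝ) * q ^ e * q ^ (-(1/2:ℝ)) from by
      rw [Real.rpow_one],
    ← Real.rpow_add hq, ← Real.rpow_add hq]
  congr 1
  ring

lemma rpow_helper2 (hq : 0 < q) (e : ℝ) : q⁻¹ * q ^ e * Real.sqrt q = q ^ (e - 1/2) := by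
  rw [Real.sqrt_eq_rpow, show q⁻¹ = q ^ (-1 : ℝ) from (Real.rpow_neg_one q).symm,
    ← Real.rpow_add hq, ← Real.rpow_add hq]
  congr 1
  ring

lemma diag00 (hq : 0 < q) (u v : ℝ) :
    -((q + q⁻¹) * ((Real.sqrt (q + q⁻¹))⁻¹ * (q⁻¹ * u - q * v) * (1 / Real.sqrt (q + q⁻¹) * q⁻¹)))
      = v - q⁻¹ ^ 2 * u := by
  have h2 : (0:ℝ) < q + q⁻¹ := by positivity
  have hs : Real.sqrt (q + q⁻¹) * Real.sqrt (q + q⁻¹) = q + q⁻¹ := Real.mul_self_sqrt h2.le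
  have hsne : Real.sqrt (q + q⁻¹) ≠ 0 := by positivity
  have hq0 : q ≠ 0 := ne_of_gt hq
  set s := Real.sqrt (q + q⁻¹) with hsdef
  rw [← hs]
  field_simp
  ring

lemma diag11 (hq : 0 < q) (u v : ℝ) :
    (q + q⁻¹) * ((Real.sqrt (q + q⁻¹))⁻¹ * (q⁻¹ * u - q * v) * (1 / Real.sqrt (q + q⁻¹) * q))
      = u - q ^ 2 * v := by
  have h2 : (0:ℝ) < q + q⁻¹ := by positivity
  have hs : Real.sqrt (q + q⁻¹) * Real.sqrt (q + q⁻¹) = q + q⁻¹ := Real.mul_self_sqrt h2.le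
  have hsne : Real.sqrt (q + q⁻¹) ≠ 0 := by positivity
  have hq0 : q ≠ 0 := ne_of_gt hq
  set s := Real.sqrt (q + q⁻¹) with hsdef
  rw [← hs]
  field_simp

open Fin.NatCast in
lemma dirac_eq (hq : 0 < q) (hq1 : q ≠ 1) :
    Dirac q n = (Matrix.blockDiagonal (Gblk q n)).submatrix (phi n) (phi n) := by
  have hq0 : q ≠ 0 := ne_of_gt hq
  ext ⟨i, a⟩ ⟨j, b⟩
  simp only [Dirac, Matrix.add_apply, Matrix.smul_apply, Matrix.kroneckerMap_apply,
    Matrix.submatrix_apply, phi, Equiv.coe_fn_mk, Z1, Zm1, Z0, Kinvmat,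
    Matrix.diagonal_mul, Matrix.neg_apply, Matrix.sub_apply, mul_FE hq, mul_EF hq,
    Matrix.blockDiagonal_apply, smul_eq_mul]
  fin_cases a <;> fin_cases b <;>
    simp only [psi1, psi0, psim1, Matrix.smul_apply, Matrix.of_apply, Matrix.cons_val',
      Matrix.cons_val_zero, Matrix.cons_val_one, Matrix.head_cons, Matrix.head_fin_const,
      Matrix.empty_val', Matrix.cons_val_fin_one, smul_eq_mul, mul_zero, zero_mul, add_zero,
      zero_add, Fin.isValue, Fin.val_zero, Fin.val_one, Nat.cast_zero, Nat.cast_one, sub_zero,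
      Fin.zero_eta, Fin.mk_one, Gblk, neg_mul, neg_neg, mul_neg, neg_zero]
  -- case (0,0)
  · rcases eq_or_ne i j with rfl | h
    · simp only [if_pos rfl]
      rw [Af, ← diag00 hq (qInt q (n - (i:ℕ)) * qInt q ((i:ℕ) + 1))
        (qInt q (n - (i:ℕ) + 1) * qInt q (i:ℕ))]
      push_cast
      ring
    · simp only [if_neg h]
      simp
  -- case (0,1)
  · by_cases h : (i:ℕ) + 1 = (j:ℕ)
    · have hi := i.isLt; have hjl := j.isLt
      have hj : j = i + 1 := by
        apply Fin.ext
        rw [Fin.val_add_one_of_lt (by simp only [Fin.lt_def, Fin.val_last]; omega)]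
        omega
      have hcond : i = j - 1 := by rw [hj, add_sub_cancel_right]
      rw [if_pos hcond]
      simp only [Fmat, Matrix.of_apply, if_pos h]
      rw [show n - (j:ℕ) + 1 = n - (i:ℕ) from by omega, show (j:ℕ) = (i:ℕ) + 1 from h.symm, Cf]
      rw [show (n:ℝ)/2 - ((i:ℕ):ℝ) - 1/2 = ((n:ℝ)/2 - ((i:ℕ):ℝ)) - 1/2 from by ring,
        ← rpow_helper2 hq]
      push_cast
      ring
    · rw [show Fmat q n i j = 0 from by simp [Fmat, h]]
      by_cases h2 : i = j - 1
      · have hj : j = i + 1 := by rw [h2, sub_add_cancel]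
        have hival : (i:ℕ) = n := by
          rcases eq_or_ne i (Fin.last n) with he | he
          · rw [he, Fin.val_last]
          · exfalso
            apply h
            have hv := congrArg Fin.val hj
            rw [Fin.val_add_one, if_neg he] at hv
            omega
        rw [if_pos h2, hival, Cf_last]
        simp
      · rw [if_neg h2]
        simp
  -- case (1,0)
  · by_cases h : (i:ℕ) = (j:ℕ) + 1
    · have hi := i.isLt; have hjl := j.isLt
      have hij : i = j + 1 := by
        apply Fin.ext
        rw [Fin.val_add_one_of_lt (by simp only [Fin.lt_def, Fin.val_last]; omega)]
        omega
      have hcond : i - 1 = j := by rw [hij, add_sub_cancel_right]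
      rw [if_pos hcond, hcond]
      simp only [Emat, Matrix.of_apply, if_pos h]
      rw [Cf]
      rw [show (n:ℝ)/2 - ((j:ℕ):ℝ) - 1/2 = ((n:ℝ)/2 - ((i:ℕ):ℝ)) + 1/2 from by
        push_cast [h]; ring, ← rpow_helper1 hq]
      push_cast
      ring
    · rw [show Emat q n i j = 0 from by simp [Emat, h]]
      by_cases h2 : i - 1 = j
      · have hij : i = j + 1 := by rw [← h2, sub_add_cancel]
        have hjval : (j:ℕ) = n := by
          rcases eq_or_ne j (Fin.last n) with he | he
          · rw [he, Fin.val_last]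
          · exfalso
            apply h
            have hv := congrArg Fin.val hij
            rw [Fin.val_add_one, if_neg he] at hv
            omega
        rw [if_pos h2, h2, hjval, Cf_last]
        simp
      · rw [if_neg h2]
        simp
  -- case (1,1)
  · simp only [sub_left_inj, sub_add_cancel]
    rcases eq_or_ne i j with rfl | h
    · simp only [if_pos rfl]
      rw [Bf, ← diag11 hq (qInt q (n - (i:ℕ)) * qInt q ((i:ℕ) + 1))
        (qInt q (n - (i:ℕ) + 1) * qInt q (i:ℕ))]
      push_cast
      ring
    · simp only [if_neg h]
      simp

lemma Cf_sq (hq : 0 < q) {k : ℕ} (hk : k < n) :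
    Cf q n k ^ 2 = (q + q⁻¹)^2 * (q^(n-k-1) / q^k) * (qInt q (n-k) * qInt q (k+1)) := by
  have h1 : ((n - k - 1 : ℕ) : ℝ) = (n:ℝ) - (k:ℝ) - 1 := by
    have h2 : (n - k - 1) + (k + 1) = n := by omega
    have h3 := congrArg (fun m : ℕ => (m:ℝ)) h2
    push_cast at h3
    linarith
  have h4 : (q ^ ((n:ℝ)/2 - (k:ℝ) - 1/2))^2 = q^(n-k-1) / q^k := by
    rw [pow_two, ← Real.rpow_add hq, ← Real.rpow_natCast q (n-k-1), ← Real.rpow_natCast q k,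
      ← Real.rpow_sub hq, h1]
    congr 1
    ring
  rw [Cf, mul_pow, mul_pow, Real.sq_sqrt (mul_nonneg (qInt_nonneg hq _) (qInt_nonneg hq _)), h4]
  ring

lemma L1n (hq : 0 < q) (hq1 : q ≠ 1) {k : ℕ} (hk : k < n) :
    (Af q n k - qInt q n) * (Af q n k + qInt q (n+2)) + Cf q n k ^ 2 = 0 := by
  have h := L1 hq hq1 k (n - k - 1)
  rw [show k+1+(n-k-1) = n from by omega, show n-k-1+1 = n-k from by omega] at h
  rw [Cf_sq hq hk]
  linear_combination h

lemma L2n (hq : 0 < q) (hq1 : q ≠ 1) {k : ℕ} (hk : k < n) :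
    Af q n k + Bf q n (k+1) = qInt q n - qInt q (n+2) := by
  have h := L2 hq hq1 k (n - k - 1)
  rw [show k+1+(n-k-1) = n from by omega] at h
  exact h

lemma L3n (hq : 0 < q) (hq1 : q ≠ 1) {k : ℕ} (hk : k < n) :
    (Bf q n (k+1) - qInt q n) * (Bf q n (k+1) + qInt q (n+2)) + Cf q n k ^ 2 = 0 := by
  have h := L3 hq hq1 k (n - k - 1)
  rw [show k+1+(n-k-1) = n from by omega, show n-k-1+1 = n-k from by omega] at h
  rw [Cf_sq hq hk]
  linear_combination h

lemma Af_last (hq : 0 < q) (hq1 : q ≠ 1) : Af q n n = qInt q n := by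
  simp [Af, Nat.sub_self, qInt_zero, qInt_one hq hq1]

lemma Bf_zero (hq : 0 < q) (hq1 : q ≠ 1) : Bf q n 0 = qInt q n := by
  simp [Bf, Nat.sub_zero, qInt_zero, qInt_one hq hq1]

lemma block_quad (hq : 0 < q) (hq1 : q ≠ 1) (k : Fin (n+1)) :
    (Gblk q n k - ((qInt q n : ℝ) : ℂ) • 1) * (Gblk q n k + ((qInt q (n+2) : ℝ) : ℂ) • 1)
      = 0 := by
  rcases eq_or_ne k (Fin.last n) with rfl | hk
  · have hval : ((Fin.last n + 1 : Fin (n+1)) : ℕ) = 0 := by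
      rw [Fin.val_add_one, if_pos rfl]
    rw [Gblk, Fin.val_last, hval, Af_last hq hq1, Bf_zero hq hq1, Cf_last]
    ext u v
    fin_cases u <;> fin_cases v <;>
      simp [Matrix.mul_apply, Fin.sum_univ_two, Matrix.one_apply] <;> ring
  · have hklt : (k:ℕ) < n := by
      have := k.isLt
      have : (k:ℕ) ≠ n := fun hc => hk (Fin.ext (by rw [hc, Fin.val_last]))
      omega
    have hval : ((k + 1 : Fin (n+1)) : ℕ) = (k:ℕ) + 1 := by
      rw [Fin.val_add_one, if_neg hk]
    rw [Gblk, hval]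
    have h1 := L1n hq hq1 hklt
    have h2 := L2n hq hq1 hklt
    have h3 := L3n hq hq1 hklt
    have c1 := congrArg (fun t : ℝ => (t : ℂ)) h1
    have c2 := congrArg (fun t : ℝ => (t : ℂ)) h2
    have c3 := congrArg (fun t : ℝ => (t : ℂ)) h3
    push_cast at c1 c2 c3
    ext u v
    fin_cases u <;> fin_cases v <;>
      simp [Matrix.mul_apply, Fin.sum_univ_two, Matrix.one_apply]
    · linear_combination c1
    · linear_combination ((Cf q n (k:ℕ) : ℝ) : ℂ) * c2
    · linear_combination ((Cf q n (k:ℕ) : ℝ) : ℂ) * c2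
    · linear_combination c3

end DiracAux

open DiracAux in
/-- For real `q > 0`, `q ≠ 1`, the Dirac operator `D_n` on `ℂ^{n+1} ⊗ ℂ²`
satisfies the quadratic relation `(D_n − [n]·1)(D_n + [n+2]·1) = 0` and has trace
`Tr(D_n) = (n+2)·[n] − n·[n+2]`.  (Equivalently, with `j = n/2`, the Dirac operator acts on
`V_j ⊗ Σ` with eigenvalue `[2j]` on the spin-`(j+1/2)` component of dimension `2j+2` and
eigenvalue `−[2j+2]` on the spin-`(j−1/2)` component of dimension `2j`.) -/
theorem dirac_quadratic_and_trace (q : ℝ) (hq : 0 < q) (hq1 : q ≠ 1) (n : ℕ) :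
    (Dirac q n - ((qInt q n : ℝ) : ℂ) • (1 : Matrix (Fin (n + 1) × Fin 2) (Fin (n + 1) × Fin 2) ℂ)) *
        (Dirac q n + ((qInt q (n + 2) : ℝ) : ℂ) • 1) = 0 ∧
    Matrix.trace (Dirac q n) =
      ((n : ℂ) + 2) * ((qInt q n : ℝ) : ℂ) - (n : ℂ) * ((qInt q (n + 2) : ℝ) : ℂ) := by
  set x : ℂ := ((qInt q n : ℝ) : ℂ) with hx
  set y : ℂ := ((qInt q (n+2) : ℝ) : ℂ) with hy
  have hsub : Dirac q n - x • 1
      = (Matrix.blockDiagonal (fun k => Gblk q n k - x • 1)).submatrix (phi n) (phi n) := by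
    rw [dirac_eq hq hq1]
    ext ⟨u, kk⟩ ⟨v, l⟩
    by_cases hkl : kk = l <;>
      simp [Matrix.blockDiagonal_apply, Matrix.one_apply, hkl, Prod.ext_iff,
        Matrix.sub_apply, Matrix.submatrix_apply, Matrix.smul_apply, phi] <;>
      split_ifs <;> simp
  have hadd : Dirac q n + y • 1
      = (Matrix.blockDiagonal (fun k => Gblk q n k + y • 1)).submatrix (phi n) (phi n) := by
    rw [dirac_eq hq hq1]
    ext ⟨u, kk⟩ ⟨v, l⟩
    by_cases hkl : kk = l <;>
      simp [Matrix.blockDiagonal_apply, Matrix.one_apply, hkl, Prod.ext_iff,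
        Matrix.add_apply, Matrix.submatrix_apply, Matrix.smul_apply, phi] <;>
      split_ifs <;> simp
  constructor
  · rw [hsub, hadd, Matrix.submatrix_mul_equiv _ _ _ (phi n) _, ← Matrix.blockDiagonal_mul,
      show (fun k => (Gblk q n k - x • 1) * (Gblk q n k + y • 1)) = (fun _ => 0) from
        funext (block_quad hq hq1)]
    ext p r
    simp [Matrix.submatrix_apply, Matrix.blockDiagonal_apply]
  · rw [dirac_eq hq hq1]
    have htr : ((Matrix.blockDiagonal (Gblk q n)).submatrix (phi n) (phi n)).trace
        = (Matrix.blockDiagonal (Gblk q n)).trace := by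
      simp only [Matrix.trace, Matrix.diag, Matrix.submatrix_apply]
      exact Equiv.sum_comp (phi n) (fun p => Matrix.blockDiagonal (Gblk q n) p p)
    rw [htr, Matrix.trace_blockDiagonal]
    have hGtr : ∀ k : Fin (n+1), (Gblk q n k).trace
        = ((Af q n (k:ℕ) : ℝ) : ℂ) + ((Bf q n (((k+1 : Fin (n+1))) : ℕ) : ℝ) : ℂ) := by
      intro k
      rw [Matrix.trace_fin_two, Gblk]
      simp
    rw [Finset.sum_congr rfl (fun k _ => hGtr k), Fin.sum_univ_castSucc]
    have hlast : ((Af q n ((Fin.last n : Fin (n+1)):ℕ) : ℝ) : ℂ)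
        + ((Bf q n (((Fin.last n + 1 : Fin (n+1))) : ℕ) : ℝ) : ℂ) = x + x := by
      rw [Fin.val_last, show ((Fin.last n + 1 : Fin (n+1)) : ℕ) = 0 from by
        rw [Fin.val_add_one, if_pos rfl], Af_last hq hq1, Bf_zero hq hq1]
    have hmid : ∀ k : Fin n, ((Af q n ((k.castSucc : Fin (n+1)):ℕ) : ℝ) : ℂ)
        + ((Bf q n (((k.castSucc + 1 : Fin (n+1))) : ℕ) : ℝ) : ℂ) = x - y := by
      intro k
      have h1 : ((k.castSucc + 1 : Fin (n+1)) : ℕ) = (k : ℕ) + 1 := by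
        rw [Fin.val_add_one, if_neg (ne_of_lt (Fin.castSucc_lt_last k)), Fin.coe_castSucc]
      rw [h1, Fin.coe_castSucc, ← Complex.ofReal_add, L2n hq hq1 k.isLt]
      push_cast
      ring
    rw [Finset.sum_congr rfl (fun k _ => hmid k), hlast, Finset.sum_const, Finset.card_univ,
      Fintype.card_fin]
    push_cast
    ring
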